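/- For any sequence of finite point sets X_n ⊂ ℝ² with |X_n| = n (each containing at least two distinct points), the ratio ρ(X_n) = P_n(M_n)/P_n(s_n*) tends to 1 as n → ∞, where M_n is the centroid of X_n, P_n the quadratic min-power objective on X_n, and s_n* its minimiser. In particular 1 ≤ ρ(X_n) ≤ (1/2)((n+1)/n)² + 1/2. -/

import Mathlib

lemma sum_norm_sub_sq_centroid {n : ℕ} (hn : 0 < n) (x : Fin n → EuclideanSpace ℝ (Fin 2))
    (t : EuclideanSpace ℝ (Fin 2)) :
    ∑ i, ‖t - x i‖ ^ 2 =
      (∑ i, ‖((n : ℝ)⁻¹ • ∑ j, x j) - x i‖ ^ 2) + n * ‖t - (n : ℝ)⁻¹ • ∑ j, x j‖ ^ 2 := by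
  set M : EuclideanSpace ℝ (Fin 2) := (n : ℝ)⁻¹ • ∑ j, x j with hMdef
  have hne : (n : ℝ) ≠ 0 := Nat.cast_ne_zero.mpr hn.ne'
  have hsum : ∑ i, (M - x i) = 0 := by
    rw [Finset.sum_sub_distrib, Finset.sum_const, Finset.card_univ, Fintype.card_fin,
      ← Nat.cast_smul_eq_nsmul ℝ, hMdef, smul_smul, mul_inv_cancel₀ hne, one_smul, sub_self]
  have expand : ∀ i : Fin n, ‖t - x i‖ ^ 2 =
      ‖t - M‖ ^ 2 + 2 * (inner ℝ (t - M) (M - x i) : ℝ) + ‖M - x i‖ ^ 2 := by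
    intro i
    have h : t - x i = (t - M) + (M - x i) := by abel
    rw [h, norm_add_sq_real]
  calc ∑ i, ‖t - x i‖ ^ 2
      = ∑ i, (‖t - M‖ ^ 2 + 2 * (inner ℝ (t - M) (M - x i) : ℝ) + ‖M - x i‖ ^ 2) :=
        Finset.sum_congr rfl fun i _ => expand i
    _ = (n : ℝ) * ‖t - M‖ ^ 2 + 2 * (inner ℝ (t - M) (∑ i, (M - x i)) : ℝ)
          + ∑ i, ‖M - x i‖ ^ 2 := by
        rw [Finset.sum_add_distrib, Finset.sum_add_distrib, Finset.sum_const,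
          Finset.card_univ, Fintype.card_fin, inner_sum, ← Finset.mul_sum,
          nsmul_eq_mul]
    _ = (∑ i, ‖M - x i‖ ^ 2) + n * ‖t - M‖ ^ 2 := by
        rw [hsum, inner_zero_right]; ring

set_option maxHeartbeats 1000000 in
/-- For any sequence of point sets `X_n` of `n` points (each with at least two distinct
points), the ratio `ρ(X_n) = P_n(M_n)/P_n(s_n*)` tends to 1 as `n → ∞`, and satisfies
`1 ≤ ρ(X_n) ≤ (1/2)((n+1)/n)² + 1/2`. -/
theorem centroid_ratio_tendsto_one
    (x : (n : ℕ) → Fin n → EuclideanSpace ℝ (Fin 2))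
    (P : (n : ℕ) → EuclideanSpace ℝ (Fin 2) → ℝ)
    (hP : ∀ (n : ℕ) (hn : 0 < n) (s : EuclideanSpace ℝ (Fin 2)),
      P n s = (∑ i, ‖s - x n i‖ ^ 2) +
        Finset.univ.sup'
          (Finset.univ_nonempty_iff.mpr (Fin.pos_iff_nonempty.mp hn))
          (fun i => ‖s - x n i‖ ^ 2))
    (M : ℕ → EuclideanSpace ℝ (Fin 2)) (hM : ∀ n, M n = (n : ℝ)⁻¹ • ∑ i, x n i)
    (s : ℕ → EuclideanSpace ℝ (Fin 2)) (hs : ∀ n, 2 ≤ n → ∀ t, P n (s n) ≤ P n t)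
    (hdist : ∀ n, 2 ≤ n → ∃ i j, x n i ≠ x n j)
    (ρ : ℕ → ℝ) (hρ : ∀ n, ρ n = P n (M n) / P n (s n)) :
    Filter.Tendsto ρ Filter.atTop (nhds 1) ∧
    ∀ n, 2 ≤ n → 1 ≤ ρ n ∧
      ρ n ≤ (1 / 2) * (((n : ℝ) + 1) / n) ^ 2 + 1 / 2 := by
  have bounds : ∀ n, 2 ≤ n → 1 ≤ ρ n ∧
      ρ n ≤ (1 / 2) * (((n : ℝ) + 1) / n) ^ 2 + 1 / 2 := by
    intro n hn2
    have hn : 0 < n := by omega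
    have hne : (Finset.univ : Finset (Fin n)).Nonempty :=
      Finset.univ_nonempty_iff.mpr (Fin.pos_iff_nonempty.mp hn)
    set m : ℝ := (n : ℝ) with hmdef
    have hm2 : (2 : ℝ) ≤ m := by rw [hmdef]; exact_mod_cast hn2
    set fM : ℝ := ∑ i, ‖M n - x n i‖ ^ 2 with hfM
    set fs : ℝ := ∑ i, ‖s n - x n i‖ ^ 2 with hfs
    set gM : ℝ := Finset.univ.sup' hne (fun i => ‖M n - x n i‖ ^ 2) with hgM
    set gs : ℝ := Finset.univ.sup' hne (fun i => ‖s n - x n i‖ ^ 2) with hgs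
    set d : ℝ := ‖s n - M n‖ with hd
    have hPM : P n (M n) = fM + gM := hP n hn (M n)
    have hPs : P n (s n) = fs + gs := hP n hn (s n)
    -- key identity
    have key : fs = fM + m * d ^ 2 := by
      rw [hfs, hfM, hd, hM n]
      exact sum_norm_sub_sq_centroid hn (x n) (s n)
    -- gs is nonnegative
    obtain ⟨i0⟩ := Fin.pos_iff_nonempty.mp hn
    have hgs0 : 0 ≤ gs :=
      le_trans (sq_nonneg ‖s n - x n i0‖)
        (Finset.le_sup' (fun i => ‖s n - x n i‖ ^ 2) (Finset.mem_univ i0))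
    -- fs is positive
    have hfs_pos : 0 < fs := by
      obtain ⟨i, j, hij⟩ := hdist n hn2
      apply Finset.sum_pos' (fun k _ => sq_nonneg _)
      by_cases h : s n = x n i
      · refine ⟨j, Finset.mem_univ j, ?_⟩
        have hne' : s n - x n j ≠ 0 := by
          rw [h]; intro hz; exact hij (sub_eq_zero.mp hz)
        exact pow_pos (norm_pos_iff.mpr hne') 2
      · have hne' : s n - x n i ≠ 0 := fun hz => h (sub_eq_zero.mp hz)
        exact ⟨i, Finset.mem_univ i, pow_pos (norm_pos_iff.mpr hne') 2⟩
    have hPs_pos : 0 < P n (s n) := by rw [hPs]; linarith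
    -- gs ≤ fs
    have hgsfs : gs ≤ fs := by
      apply Finset.sup'_le
      intro i _
      exact Finset.single_le_sum (f := fun k => ‖s n - x n k‖ ^ 2)
        (fun k _ => sq_nonneg _) (Finset.mem_univ i)
    -- gM bound
    have hsq : Real.sqrt gs ^ 2 = gs := Real.sq_sqrt hgs0
    have hsqrt0 : 0 ≤ Real.sqrt gs := Real.sqrt_nonneg _
    have hd0 : 0 ≤ d := norm_nonneg _
    have hgMle : gM ≤ (d + Real.sqrt gs) ^ 2 := by
      apply Finset.sup'_le
      intro i _
      have h1 : ‖M n - x n i‖ ≤ d + ‖s n - x n i‖ := by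
        have : M n - x n i = -(s n - M n) + (s n - x n i) := by abel
        rw [this]
        calc ‖-(s n - M n) + (s n - x n i)‖ ≤ ‖-(s n - M n)‖ + ‖s n - x n i‖ :=
              norm_add_le _ _
          _ = d + ‖s n - x n i‖ := by rw [norm_neg]
      have h2 : ‖s n - x n i‖ ≤ Real.sqrt gs := by
        have := Finset.le_sup' (fun i => ‖s n - x n i‖ ^ 2) (Finset.mem_univ i)
        calc ‖s n - x n i‖ = Real.sqrt (‖s n - x n i‖ ^ 2) :=
              (Real.sqrt_sq (norm_nonneg _)).symm
          _ ≤ Real.sqrt gs := Real.sqrt_le_sqrt this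
      have h3 : ‖M n - x n i‖ ≤ d + Real.sqrt gs := by linarith
      exact pow_le_pow_left₀ (norm_nonneg _) h3 2
    clear_value fM fs gM gs d m
    -- main inequality: P(M)*(m-1) ≤ P(s)*(m-1) + gs
    have step1 : P n (M n) * (m - 1) ≤ P n (s n) * (m - 1) + gs := by
      have hPMle : P n (M n) ≤ fs - m * d ^ 2 + (d + Real.sqrt gs) ^ 2 := by
        rw [hPM]; nlinarith [hgMle, key]
      nlinarith [sq_nonneg ((m - 1) * d - Real.sqrt gs), hPMle, hPs, hsq, hm2, sq_nonneg d]
    have h2gs : 2 * gs ≤ P n (s n) := by rw [hPs]; linarith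
    constructor
    · rw [hρ, le_div_iff₀ hPs_pos, one_mul]
      exact hs n hn2 (M n)
    · rw [hρ, div_le_iff₀ hPs_pos]
      have hm1pos : (0 : ℝ) < m - 1 := by linarith
      have hmpos : (0 : ℝ) < m := by linarith
      have hc : (1 / 2) * ((m + 1) / m) ^ 2 + 1 / 2 = (2 * m ^ 2 + 2 * m + 1) / (2 * m ^ 2) := by
        field_simp; ring
      rw [hc, div_mul_eq_mul_div, le_div_iff₀ (by positivity)]
      have h3 := mul_le_mul_of_nonneg_left step1 (by positivity : (0:ℝ) ≤ 2 * m ^ 2)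
      have h4 := mul_le_mul_of_nonneg_left h2gs (by positivity : (0:ℝ) ≤ m ^ 2)
      have h5 : (0:ℝ) ≤ P n (s n) * (m ^ 2 - m - 1) :=
        mul_nonneg hPs_pos.le (by nlinarith [hm2, sq_nonneg (m - 1)])
      have hfin : P n (M n) * (2 * m ^ 2) * (m - 1) ≤
          (2 * m ^ 2 + 2 * m + 1) * P n (s n) * (m - 1) := by
        nlinarith [h3, h4, h5]
      exact le_of_mul_le_mul_right hfin hm1pos
  refine ⟨?_, bounds⟩
  have hupper : Filter.Tendsto (fun n : ℕ => (1 / 2) * (((n : ℝ) + 1) / n) ^ 2 + 1 / 2)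
      Filter.atTop (nhds 1) := by
    have h1 : Filter.Tendsto (fun n : ℕ => 1 + 1 / (n : ℝ)) Filter.atTop (nhds 1) := by
      have := tendsto_one_div_atTop_nhds_zero_nat (𝕜 := ℝ)
      simpa using tendsto_const_nhds.add this
    have h2 : Filter.Tendsto (fun n : ℕ => (1 / 2) * (1 + 1 / (n : ℝ)) ^ 2 + 1 / 2)
        Filter.atTop (nhds 1) := by
      have h := ((h1.pow 2).const_mul (1 / 2 : ℝ)).add_const (1 / 2 : ℝ)
      convert h using 2
      norm_num
    apply h2.congr'
    filter_upwards [Filter.eventually_ge_atTop 1] with n hn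
    have hn0 : (n : ℝ) ≠ 0 := Nat.cast_ne_zero.mpr (by omega)
    field_simp
  apply tendsto_of_tendsto_of_tendsto_of_le_of_le' tendsto_const_nhds hupper
  · filter_upwards [Filter.eventually_ge_atTop 2] with n hn
    exact (bounds n hn).1
  · filter_upwards [Filter.eventually_ge_atTop 2] with n hn
    exact (bounds n hn).2
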